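/- Fix a real number k > 0 that is not an integer. Let S_N(k) denote the closed-form second-order CUE spectral form factor of Proposition 1. Then S_N(k) − (2sin²(πk)/π²)·log N converges as N → ∞ to h(k) = (1 − (2sin²(πk)/π²)ψ₁(k+1))·k − (2sin²(πk)/π²)ψ₀(k+1) − sin(2πk)/(2π) + 2sin²(πk)/π². -/

import Mathlib

open Real Filter Finset

/-- The `k`-th polygamma function: the `(k+1)`-st derivative of `log ∘ Γ`.
(Since `Real.log` of a negative number is the log of its absolute value, this
agrees with the analytic continuation of the polygamma functions.) -/
noncomputable def polygamma (k : ℕ) (x : ℝ) : ℝ :=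
  iteratedDeriv (k + 1) (fun y => Real.log (Real.Gamma y)) x

/-- The digamma function `ψ₀`. -/
noncomputable def digamma (x : ℝ) : ℝ := polygamma 0 x

/-- The trigamma function `ψ₁`. -/
noncomputable def trigamma (x : ℝ) : ℝ := polygamma 1 x


/-- The closed-form second-order CUE spectral form factor of Proposition 1. -/
noncomputable def SFF (N : ℕ) (k : ℝ) : ℝ :=
  min (N : ℝ) (|k| - Real.sin (2 * π * |k|) / (2 * π)) +
    Real.sin (π * |k|) ^ 2 / π ^ 2 *
      (digamma ((N : ℝ) + |k|) + ((N : ℝ) + |k|) * trigamma ((N : ℝ) + |k|) +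
        digamma ((abs ((N : ℝ) - |k|)) + 1) + (abs ((N : ℝ) - |k|)) * trigamma ((abs ((N : ℝ) - |k|)) + 1) -
        2 * |k| * trigamma (|k| + 1) - 2 * digamma (|k| + 1))

section
open Topology
namespace SFFAux

noncomputable def dg (x : ℝ) : ℝ :=
  -Real.eulerMascheroniConstant + ∑' m : ℕ, (1 / ((m : ℝ) + 1) - 1 / (x + m))

noncomputable def tg (x : ℝ) : ℝ := ∑' m : ℕ, 1 / (x + (m : ℝ)) ^ 2

noncomputable def gseq (n : ℕ) (x : ℝ) : ℝ :=
  Real.log n - ∑ m ∈ Finset.range (n + 1), 1 / (x + m)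

noncomputable def hseq (n : ℕ) (x : ℝ) : ℝ :=
  ∑ m ∈ Finset.range (n + 1), 1 / (x + (m : ℝ)) ^ 2

lemma base_summable : Summable (fun m : ℕ => 1 / ((m : ℝ) + 1) ^ 2) := by
  have := Real.summable_one_div_nat_pow.mpr (le_refl 2)
  have h2 := (summable_nat_add_iff 1).mpr this
  refine h2.congr fun m => ?_
  push_cast
  ring

lemma lb_aux {x : ℝ} (hx : 0 < x) (m : ℕ) : min x 1 * ((m : ℝ) + 1) ≤ x + m := by
  rcases le_total x 1 with h | h
  · rw [min_eq_left h]
    nlinarith [Nat.cast_nonneg (α := ℝ) m]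
  · rw [min_eq_right h]
    nlinarith [Nat.cast_nonneg (α := ℝ) m]

lemma summable_tg {x : ℝ} (hx : 0 < x) : Summable (fun m : ℕ => 1 / (x + (m : ℝ)) ^ 2) := by
  have hc : 0 < min x 1 := lt_min hx one_pos
  refine Summable.of_nonneg_of_le (fun m => by positivity)
    (fun m => ?_) (base_summable.mul_left (1 / (min x 1) ^ 2))
  have h1 := lb_aux hx m
  have hm1 : (0:ℝ) < (m : ℝ) + 1 := by positivity
  rw [div_mul_div_comm, one_mul]
  apply one_div_le_one_div_of_le (by positivity)
  calc (min x 1) ^ 2 * ((m:ℝ)+1) ^ 2 = (min x 1 * ((m:ℝ)+1))^2 := by ring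
  _ ≤ (x + m) ^ 2 := by nlinarith [lb_aux hx m, mul_pos hc hm1]

lemma dgterm_eq {x : ℝ} (hx : 0 < x) (m : ℕ) :
    1 / ((m : ℝ) + 1) - 1 / (x + m) = (x - 1) / (((m : ℝ) + 1) * (x + m)) := by
  have h1 : ((m : ℝ) + 1) ≠ 0 := by positivity
  have h2 : (x + (m:ℝ)) ≠ 0 := by positivity
  field_simp
  ring

lemma summable_dg {x : ℝ} (hx : 0 < x) :
    Summable (fun m : ℕ => 1 / ((m : ℝ) + 1) - 1 / (x + m)) := by
  have hc : 0 < min x 1 := lt_min hx one_pos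
  refine Summable.of_norm_bounded ((base_summable.mul_left (|x - 1| / min x 1))) (fun m => ?_)
  rw [Real.norm_eq_abs, dgterm_eq hx m, abs_div]
  have hm1 : (0:ℝ) < (m : ℝ) + 1 := by positivity
  have h2 : (0:ℝ) < x + m := by positivity
  rw [abs_of_pos (show (0:ℝ) < ((m:ℝ)+1)*(x+(m:ℝ)) by positivity), div_mul_div_comm, mul_one]
  have hle : min x 1 * ((m:ℝ)+1)^2 ≤ ((m:ℝ)+1) * (x+m) := by
    have := lb_aux hx m; nlinarith
  gcongr


lemma hasDerivAt_logGammaSeq {x : ℝ} (hx : 0 < x) (n : ℕ) :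
    HasDerivAt (fun y => Real.BohrMollerup.logGammaSeq y n) (gseq n x) x := by
  unfold Real.BohrMollerup.logGammaSeq gseq
  have h1 : HasDerivAt (fun y : ℝ => y * Real.log n + Real.log (Nat.factorial n)) (Real.log n) x := by
    simpa using ((hasDerivAt_id x).mul_const (Real.log n)).add_const (Real.log (Nat.factorial n))
  have h2 : HasDerivAt (fun y : ℝ => ∑ m ∈ Finset.range (n + 1), Real.log (y + m))
      (∑ m ∈ Finset.range (n + 1), 1 / (x + m)) x := by
    refine HasDerivAt.fun_sum fun m _ => ?_
    have : HasDerivAt (fun y : ℝ => y + (m : ℝ)) 1 x := (hasDerivAt_id x).add_const _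
    simpa using this.log (by positivity)
  simpa using h1.fun_sub h2

lemma hasDerivAt_gseq {x : ℝ} (hx : 0 < x) (n : ℕ) :
    HasDerivAt (gseq n) (hseq n x) x := by
  unfold gseq hseq
  have h2 : HasDerivAt (fun y : ℝ => ∑ m ∈ Finset.range (n + 1), 1 / (y + m))
      (∑ m ∈ Finset.range (n + 1), -(1 / (x + (m : ℝ)) ^ 2)) x := by
    refine HasDerivAt.fun_sum fun m _ => ?_
    have h : HasDerivAt (fun y : ℝ => y + (m : ℝ)) 1 x := (hasDerivAt_id x).add_const _
    have := h.fun_inv (by positivity)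
    simpa [one_div, neg_div] using this
  have := (hasDerivAt_const x (Real.log n)).fun_sub h2
  simpa using this

lemma teleHasSum {t : ℝ} (ht : 0 < t) :
    HasSum (fun j : ℕ => 1 / (t + j) - 1 / (t + j + 1)) (1 / t) := by
  have hsum : Summable (fun j : ℕ => 1 / (t + j) - 1 / (t + j + 1)) := by
    refine Summable.of_nonneg_of_le (fun j => ?_) (fun j => ?_) (summable_tg ht)
    · have h1 : (0:ℝ) < t + j := by positivity
      have h2 : (0:ℝ) < t + j + 1 := by positivity
      rw [sub_nonneg]
      apply one_div_le_one_div_of_le h1; linarith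
    · have h1 : (0:ℝ) < t + j := by positivity
      have h2 : (0:ℝ) < t + j + 1 := by positivity
      have : 1 / (t + (j:ℝ)) - 1 / (t + j + 1) = 1 / ((t + j) * (t + j + 1)) := by
        field_simp
        ring
      rw [this]
      apply one_div_le_one_div_of_le (by positivity)
      nlinarith
  rw [hsum.hasSum_iff_tendsto_nat]
  have heq : ∀ n : ℕ, ∑ j ∈ Finset.range n, (1 / (t + j) - 1 / (t + j + 1))
      = 1 / t - 1 / (t + n) := by
    intro n
    have h := Finset.sum_range_sub' (fun j : ℕ => 1 / (t + (j:ℝ))) n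
    simp only [Nat.cast_add, Nat.cast_one, Nat.cast_zero, add_zero, ← add_assoc] at h
    exact h
  simp_rw [heq]
  have h0 : Tendsto (fun n : ℕ => 1 / (t + (n:ℝ))) atTop (𝓝 0) :=
    tendsto_const_nhds.div_atTop
      (tendsto_atTop_add_const_left atTop t tendsto_natCast_atTop_atTop)
  simpa using tendsto_const_nhds.sub h0


lemma harmonic_cast (n : ℕ) :
    ((harmonic n : ℚ) : ℝ) = ∑ m ∈ Finset.range n, 1 / ((m : ℝ) + 1) := by
  rw [harmonic]
  push_cast
  refine Finset.sum_congr rfl fun m _ => by rw [one_div]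

lemma tendsto_log_sub_harmonic :
    Tendsto (fun n : ℕ => Real.log n - ∑ m ∈ Finset.range (n + 1), 1 / ((m : ℝ) + 1)) atTop
      (𝓝 (-Real.eulerMascheroniConstant)) := by
  have h1 : Tendsto (fun n : ℕ => ((harmonic (n+1) : ℚ) : ℝ) - Real.log (n+1)) atTop
      (𝓝 Real.eulerMascheroniConstant) := by
    have := Real.tendsto_harmonic_sub_log.comp (tendsto_add_atTop_nat 1)
    refine this.congr fun n => by simp [Function.comp]
  have h2 := (h1.add tendsto_log_nat_add_one_sub_log).neg
  rw [add_zero] at h2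
  refine h2.congr fun n => ?_
  rw [harmonic_cast]
  push_cast
  ring

lemma gseq_split (n : ℕ) (x : ℝ) :
    gseq n x = (Real.log n - ∑ m ∈ Finset.range (n + 1), 1 / ((m : ℝ) + 1))
      + ∑ m ∈ Finset.range (n + 1), (1 / ((m : ℝ) + 1) - 1 / (x + m)) := by
  rw [gseq, Finset.sum_sub_distrib]
  ring

lemma tendsto_gseq {x : ℝ} (hx : 0 < x) :
    Tendsto (fun n => gseq n x) atTop (𝓝 (dg x)) := by
  have h2 : Tendsto (fun n : ℕ => ∑ m ∈ Finset.range (n + 1), (1 / ((m : ℝ) + 1) - 1 / (x + m)))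
      atTop (𝓝 (∑' m : ℕ, (1 / ((m : ℝ) + 1) - 1 / (x + m)))) :=
    ((summable_dg hx).hasSum.tendsto_sum_nat).comp (tendsto_add_atTop_nat 1)
  have := tendsto_log_sub_harmonic.add h2
  rw [dg]
  refine this.congr fun n => (gseq_split n x).symm


set_option maxHeartbeats 1000000 in
lemma tg_tail_le {a x : ℝ} (ha : 0 < a) (ha1 : a ≤ 1) (hax : a ≤ x) (n : ℕ) :
    ∑' j : ℕ, 1 / (x + ((j + (n + 1) : ℕ) : ℝ)) ^ 2 ≤ 1 / (a + n) := by
  have hx : 0 < x := ha.trans_le hax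
  have ht : (0:ℝ) < a + n := by positivity
  rw [← (teleHasSum ht).tsum_eq]
  refine Summable.tsum_le_tsum (fun j => ?_) ((summable_nat_add_iff (n+1)).mpr (summable_tg hx))
    (teleHasSum ht).summable
  have h1 : (0:ℝ) < a + ↑n + ↑j := by positivity
  have h2 : (0:ℝ) < a + ↑n + ↑j + 1 := by positivity
  have heq : 1 / (a + ↑n + ↑j) - 1 / (a + ↑n + ↑j + 1)
      = 1 / ((a + ↑n + ↑j) * (a + ↑n + ↑j + 1)) := by field_simp; ring
  rw [heq]
  apply one_div_le_one_div_of_le (by positivity)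
  have : (a + ↑n + ↑j + 1) ≤ x + ((j + (n + 1) : ℕ) : ℝ) := by push_cast; linarith
  nlinarith

set_option maxHeartbeats 1000000 in
lemma dg_tail_le {a b x : ℝ} (ha : 0 < a) (ha1 : a ≤ 1) (hax : a ≤ x) (hxb : x ≤ b) (n : ℕ) :
    |∑' j : ℕ, (1 / (((j + (n + 1) : ℕ) : ℝ) + 1) - 1 / (x + ((j + (n + 1) : ℕ) : ℝ)))|
      ≤ (b + 1) * (1 / (a + n)) := by
  have hx : 0 < x := ha.trans_le hax
  have ht : (0:ℝ) < a + n := by positivity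
  have hsum : Summable (fun j : ℕ =>
      (1 / (((j + (n + 1) : ℕ) : ℝ) + 1) - 1 / (x + ((j + (n + 1) : ℕ) : ℝ)))) :=
    (summable_nat_add_iff (n+1)).mpr (summable_dg hx)
  have htele := (teleHasSum ht).mul_left (b + 1)
  calc |∑' j : ℕ, (1 / (((j + (n + 1) : ℕ) : ℝ) + 1) - 1 / (x + ((j + (n + 1) : ℕ) : ℝ)))|
      ≤ ∑' j : ℕ, |1 / (((j + (n + 1) : ℕ) : ℝ) + 1) - 1 / (x + ((j + (n + 1) : ℕ) : ℝ))| := by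
        simpa using norm_tsum_le_tsum_norm (f := fun j : ℕ =>
          (1 / (((j + (n + 1) : ℕ) : ℝ) + 1) - 1 / (x + ((j + (n + 1) : ℕ) : ℝ)))) hsum.abs
    _ ≤ ∑' j : ℕ, (b + 1) * (1 / (a + ↑n + ↑j) - 1 / (a + ↑n + ↑j + 1)) := by
        refine Summable.tsum_le_tsum (fun j => ?_) hsum.abs htele.summable
        have h1 : (0:ℝ) < a + ↑n + ↑j := by positivity
        have h2 : (0:ℝ) < a + ↑n + ↑j + 1 := by positivity
        have hm : ((j + (n + 1) : ℕ) : ℝ) = (j:ℝ) + n + 1 := by push_cast; ring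
        rw [hm]
        have p1 : ((j:ℝ) + ↑n + 1 + 1) ≠ 0 := by positivity
        have p2 : (x + ((j:ℝ) + ↑n + 1)) ≠ 0 := by positivity
        have heq0 : 1 / ((j:ℝ) + ↑n + 1 + 1) - 1 / (x + ((j:ℝ) + ↑n + 1))
            = (x - 1) / (((j:ℝ) + ↑n + 1 + 1) * (x + ((j:ℝ) + ↑n + 1))) := by
          field_simp
          ring
        have habs : |x - 1| ≤ b + 1 := by
          rw [abs_le]; constructor <;> nlinarith
        have hdenpos : (0:ℝ) < ((j:ℝ) + ↑n + 1 + 1) * (x + ((j:ℝ) + ↑n + 1)) := by positivity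
        rw [heq0, abs_div, abs_of_pos hdenpos]
        have heq : 1 / (a + ↑n + ↑j) - 1 / (a + ↑n + ↑j + 1)
            = 1 / ((a + ↑n + ↑j) * (a + ↑n + ↑j + 1)) := by field_simp; ring
        rw [heq, mul_one_div]
        refine div_le_div₀ (by nlinarith : (0:ℝ) ≤ b + 1) habs (by positivity) ?_
        nlinarith
    _ = (b + 1) * (1 / (a + n)) := htele.tsum_eq


lemma tendsto_bound {a : ℝ} (ha : 0 < a) : Tendsto (fun n : ℕ => 1 / (a + n)) atTop (𝓝 0) :=
  tendsto_const_nhds.div_atTop (tendsto_atTop_add_const_left atTop a tendsto_natCast_atTop_atTop)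

lemma tendstoUniformlyOn_hseq {a b : ℝ} (ha : 0 < a) (ha1 : a ≤ 1) :
    TendstoUniformlyOn hseq tg atTop (Set.Ioo a b) := by
  rw [Metric.tendstoUniformlyOn_iff]
  intro ε hε
  filter_upwards [(tendsto_bound ha).eventually_lt_const hε] with n hn x hx
  have hx0 : 0 < x := ha.trans hx.1
  have hsplit := Summable.sum_add_tsum_nat_add (f := fun m : ℕ => 1 / (x + (m:ℝ)) ^ 2) (n+1)
    (summable_tg hx0)
  have htail : tg x - hseq n x = ∑' j : ℕ, 1 / (x + ((j + (n + 1) : ℕ) : ℝ)) ^ 2 := by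
    rw [tg, hseq, ← hsplit]; ring
  rw [Real.dist_eq, htail, abs_of_nonneg (tsum_nonneg (fun j => by positivity))]
  exact lt_of_le_of_lt (tg_tail_le ha ha1 hx.1.le n) hn

lemma tendstoUniformlyOn_gseq {a b : ℝ} (ha : 0 < a) (ha1 : a ≤ 1) :
    TendstoUniformlyOn gseq dg atTop (Set.Ioo a b) := by
  rw [Metric.tendstoUniformlyOn_iff]
  intro ε hε
  have hA : Tendsto (fun n : ℕ =>
      |(-Real.eulerMascheroniConstant) -
        (Real.log n - ∑ m ∈ Finset.range (n + 1), 1 / ((m : ℝ) + 1))| + (b+1) * (1 / (a + n)))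
      atTop (𝓝 0) := by
    have h1 := ((tendsto_const_nhds (x := -Real.eulerMascheroniConstant)).sub tendsto_log_sub_harmonic).abs
    have h2 := (tendsto_bound ha).const_mul (b+1)
    simpa using h1.add h2
  filter_upwards [hA.eventually_lt_const hε] with n hn x hx
  have hx0 : 0 < x := ha.trans hx.1
  have hsplit := Summable.sum_add_tsum_nat_add
    (f := fun m : ℕ => 1 / ((m:ℝ) + 1) - 1 / (x + (m:ℝ))) (n+1) (summable_dg hx0)
  have hdiff : dg x - gseq n x = ((-Real.eulerMascheroniConstant) -
      (Real.log n - ∑ m ∈ Finset.range (n + 1), 1 / ((m : ℝ) + 1)))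
      + ∑' j : ℕ, (1 / (((j + (n + 1) : ℕ) : ℝ) + 1) - 1 / (x + ((j + (n + 1) : ℕ) : ℝ))) := by
    rw [dg, gseq_split, ← hsplit]; ring
  rw [Real.dist_eq, hdiff]
  calc |((-Real.eulerMascheroniConstant) -
      (Real.log n - ∑ m ∈ Finset.range (n + 1), 1 / ((m : ℝ) + 1)))
      + ∑' j : ℕ, (1 / (((j + (n + 1) : ℕ) : ℝ) + 1) - 1 / (x + ((j + (n + 1) : ℕ) : ℝ)))|
      ≤ |(-Real.eulerMascheroniConstant) -
      (Real.log n - ∑ m ∈ Finset.range (n + 1), 1 / ((m : ℝ) + 1))|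
      + |∑' j : ℕ, (1 / (((j + (n + 1) : ℕ) : ℝ) + 1) - 1 / (x + ((j + (n + 1) : ℕ) : ℝ)))| :=
        abs_add_le _ _
    _ ≤ |(-Real.eulerMascheroniConstant) -
      (Real.log n - ∑ m ∈ Finset.range (n + 1), 1 / ((m : ℝ) + 1))| + (b+1) * (1 / (a + n)) := by
        gcongr
        exact dg_tail_le ha ha1 hx.1.le hx.2.le n
    _ < ε := hn


lemma interval_params {x : ℝ} (hx : 0 < x) :
    0 < min x 1 / 2 ∧ min x 1 / 2 ≤ 1 ∧ min x 1 / 2 < x ∧ x < x + 1 := by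
  have hm : 0 < min x 1 := lt_min hx one_pos
  have h1 := min_le_left x 1
  have h2 := min_le_right x 1
  refine ⟨by linarith, by linarith, by linarith, by linarith⟩

lemma hasDerivAt_logGamma {x : ℝ} (hx : 0 < x) :
    HasDerivAt (fun y => Real.log (Real.Gamma y)) (dg x) x := by
  obtain ⟨ha, ha1, hax, hxb⟩ := interval_params hx
  exact hasDerivAt_of_tendstoUniformlyOn isOpen_Ioo
    (tendstoUniformlyOn_gseq (b := x + 1) ha ha1)
    (Filter.Eventually.of_forall fun n y hy => hasDerivAt_logGammaSeq (ha.trans hy.1) n)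
    (fun y hy => Real.BohrMollerup.tendsto_log_gamma (ha.trans hy.1)) ⟨hax, hxb⟩

lemma digamma_eq {x : ℝ} (hx : 0 < x) : digamma x = dg x := by
  rw [digamma, polygamma, iteratedDeriv_one]
  exact (hasDerivAt_logGamma hx).deriv

lemma hasDerivAt_dg {x : ℝ} (hx : 0 < x) : HasDerivAt dg (tg x) x := by
  obtain ⟨ha, ha1, hax, hxb⟩ := interval_params hx
  exact hasDerivAt_of_tendstoUniformlyOn isOpen_Ioo
    (tendstoUniformlyOn_hseq (b := x + 1) ha ha1)
    (Filter.Eventually.of_forall fun n y hy => hasDerivAt_gseq (ha.trans hy.1) n)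
    (fun y hy => tendsto_gseq (ha.trans hy.1)) ⟨hax, hxb⟩

lemma trigamma_eq {x : ℝ} (hx : 0 < x) : trigamma x = tg x := by
  rw [trigamma, polygamma, iteratedDeriv_succ, iteratedDeriv_one]
  have hev : deriv (fun y => Real.log (Real.Gamma y)) =ᶠ[nhds x] dg := by
    filter_upwards [eventually_gt_nhds hx] with y hy
    exact (hasDerivAt_logGamma hy).deriv
  rw [hev.deriv_eq]
  exact (hasDerivAt_dg hx).deriv


lemma logGamma_rec {y : ℝ} (hy : 0 < y) :
    Real.log (Real.Gamma (y + 1)) = Real.log (Real.Gamma y) + Real.log y := by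
  rw [Real.Gamma_add_one hy.ne', Real.log_mul hy.ne' (Real.Gamma_pos_of_pos hy).ne', add_comm]

lemma digamma_eq_deriv (x : ℝ) :
    digamma x = deriv (Real.log ∘ Real.Gamma) x := by
  rw [digamma, polygamma, iteratedDeriv_one]
  rfl

lemma digamma_le_log {x : ℝ} (hx : 1 < x) : digamma x ≤ Real.log x := by
  have hx0 : (0:ℝ) < x := by linarith
  have hder : DifferentiableAt ℝ (Real.log ∘ Real.Gamma) x :=
    (hasDerivAt_logGamma hx0).differentiableAt
  have h := Real.convexOn_log_Gamma.deriv_le_slope (Set.mem_Ioi.mpr hx0)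
    (Set.mem_Ioi.mpr (by linarith : (0:ℝ) < x + 1)) (by linarith) hder
  rw [digamma_eq_deriv]
  refine h.trans (le_of_eq ?_)
  rw [slope_def_field]
  simp only [Function.comp_apply]
  rw [logGamma_rec hx0]
  field_simp
  ring

lemma log_le_digamma {x : ℝ} (hx : 1 < x) : Real.log (x - 1) ≤ digamma x := by
  have hx0 : (0:ℝ) < x := by linarith
  have hx1 : (0:ℝ) < x - 1 := by linarith
  have hder : DifferentiableAt ℝ (Real.log ∘ Real.Gamma) x :=
    (hasDerivAt_logGamma hx0).differentiableAt
  have h := Real.convexOn_log_Gamma.slope_le_deriv (Set.mem_Ioi.mpr hx1)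
    (Set.mem_Ioi.mpr hx0) (by linarith) hder
  rw [digamma_eq_deriv]
  refine le_trans (le_of_eq ?_) h
  rw [slope_def_field]
  simp only [Function.comp_apply]
  have hrec : Real.log (Real.Gamma x) = Real.log (Real.Gamma (x - 1)) + Real.log (x - 1) := by
    have := logGamma_rec hx1
    rwa [sub_add_cancel] at this
  rw [hrec, show x - (x - 1) = (1:ℝ) by ring]
  ring

lemma tg_lower {x : ℝ} (hx : 0 < x) : 1 / x ≤ tg x := by
  rw [← (teleHasSum hx).tsum_eq, tg]
  refine Summable.tsum_le_tsum (fun j => ?_) (teleHasSum hx).summable (summable_tg hx)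
  have h1 : (0:ℝ) < x + j := by positivity
  have h2 : (0:ℝ) < x + j + 1 := by positivity
  have heq : 1 / (x + (j:ℝ)) - 1 / (x + j + 1) = 1 / ((x + j) * (x + j + 1)) := by field_simp; ring
  rw [heq]
  apply one_div_le_one_div_of_le (by positivity)
  nlinarith

set_option maxHeartbeats 1000000 in
lemma tg_upper {x : ℝ} (hx : 0 < x) : tg x ≤ 1 / x + 1 / x ^ 2 := by
  rw [tg, Summable.tsum_eq_zero_add (summable_tg hx)]
  have h0 : 1 / (x + ((0:ℕ):ℝ)) ^ 2 = 1 / x ^ 2 := by norm_num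
  rw [h0, add_comm (1/x) (1/x^2)]
  gcongr
  rw [← (teleHasSum hx).tsum_eq]
  refine Summable.tsum_le_tsum (fun j => ?_) ((summable_nat_add_iff 1).mpr (summable_tg hx))
    (teleHasSum hx).summable
  have h1 : (0:ℝ) < x + j := by positivity
  have h2 : (0:ℝ) < x + j + 1 := by positivity
  have heq : 1 / (x + (j:ℝ)) - 1 / (x + j + 1) = 1 / ((x + j) * (x + j + 1)) := by field_simp; ring
  rw [heq]
  have hc : (x + ((j+1:ℕ):ℝ)) = x + j + 1 := by push_cast; ring
  rw [hc]
  apply one_div_le_one_div_of_le (by positivity)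
  nlinarith


lemma tendsto_inv_shift (c : ℝ) : Tendsto (fun N : ℕ => 1 / ((N:ℝ) + c)) atTop (𝓝 0) :=
  tendsto_const_nhds.div_atTop (tendsto_atTop_add_const_right atTop c tendsto_natCast_atTop_atTop)

lemma tendsto_log_shift (c : ℝ) :
    Tendsto (fun N : ℕ => Real.log ((N:ℝ) + c) - Real.log N) atTop (𝓝 0) := by
  have h1 : Tendsto (fun N : ℕ => 1 + c / (N:ℝ)) atTop (𝓝 1) := by
    have := (tendsto_const_nhds (x := c)).div_atTop (tendsto_natCast_atTop_atTop (R := ℝ))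
    simpa using (tendsto_const_nhds (x := (1:ℝ))).add this
  have h2 := (Real.continuousAt_log one_ne_zero).tendsto.comp h1
  rw [Real.log_one] at h2
  refine h2.congr' ?_
  filter_upwards [(tendsto_natCast_atTop_atTop (R := ℝ)).eventually_gt_atTop |c|] with N hN
  have hN0 : (0:ℝ) < N := lt_of_le_of_lt (abs_nonneg c) hN
  have hNc : (0:ℝ) < (N:ℝ) + c := by have := neg_abs_le c; linarith
  simp only [Function.comp_apply]
  rw [show 1 + c / (N:ℝ) = ((N:ℝ) + c) / N by field_simp, Real.log_div hNc.ne' hN0.ne']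

lemma dg_asymp (c : ℝ) :
    Tendsto (fun N : ℕ => digamma ((N:ℝ) + c) - Real.log N) atTop (𝓝 0) := by
  refine tendsto_of_tendsto_of_tendsto_of_le_of_le' (tendsto_log_shift (c - 1))
    (tendsto_log_shift c) ?_ ?_
  · filter_upwards [(tendsto_natCast_atTop_atTop (R := ℝ)).eventually_gt_atTop (|c| + 2)]
      with N hN
    have habs := neg_abs_le c
    have h1 : 1 < (N:ℝ) + c := by linarith
    have h2 := log_le_digamma h1
    rw [show (N:ℝ) + c - 1 = (N:ℝ) + (c - 1) by ring] at h2
    linarith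
  · filter_upwards [(tendsto_natCast_atTop_atTop (R := ℝ)).eventually_gt_atTop (|c| + 2)]
      with N hN
    have habs := neg_abs_le c
    have h1 : 1 < (N:ℝ) + c := by linarith
    have h2 := digamma_le_log h1
    linarith

lemma tri_asymp (c e : ℝ) (he : 0 ≤ e) :
    Tendsto (fun N : ℕ => ((N:ℝ) + c) * trigamma ((N:ℝ) + c + e)) atTop (𝓝 1) := by
  have hinv : Tendsto (fun N : ℕ => 1 / ((N:ℝ) + c + e)) atTop (𝓝 0) :=
    (tendsto_inv_shift (c + e)).congr (fun N => by ring_nf)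
  have hlo : Tendsto (fun N : ℕ => 1 - e * (1 / ((N:ℝ) + c + e))) atTop (𝓝 1) := by
    simpa using (tendsto_const_nhds (x := (1:ℝ))).sub (hinv.const_mul e)
  have hhi : Tendsto (fun N : ℕ => 1 + 1 / ((N:ℝ) + c + e)) atTop (𝓝 1) := by
    simpa using (tendsto_const_nhds (x := (1:ℝ))).add hinv
  refine tendsto_of_tendsto_of_tendsto_of_le_of_le' hlo hhi ?_ ?_
  · filter_upwards [(tendsto_natCast_atTop_atTop (R := ℝ)).eventually_gt_atTop (|c| + |e| + 1)]
      with N hN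
    have habs := neg_abs_le c
    have habse := neg_abs_le e
    have han := abs_nonneg c
    have hane := abs_nonneg e
    have h0 : (0:ℝ) < (N:ℝ) + c := by linarith
    have h0e : (0:ℝ) < (N:ℝ) + c + e := by linarith
    rw [trigamma_eq h0e]
    have hl := tg_lower h0e
    rw [show 1 - e * (1 / ((N:ℝ) + c + e)) = ((N:ℝ) + c) * (1 / ((N:ℝ) + c + e)) by
      field_simp; ring]
    exact mul_le_mul_of_nonneg_left hl h0.le
  · filter_upwards [(tendsto_natCast_atTop_atTop (R := ℝ)).eventually_gt_atTop (|c| + |e| + 1)]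
      with N hN
    have habs := neg_abs_le c
    have habse := neg_abs_le e
    have han := abs_nonneg c
    have hane := abs_nonneg e
    have h0 : (0:ℝ) < (N:ℝ) + c := by linarith
    have h0e : (0:ℝ) < (N:ℝ) + c + e := by linarith
    rw [trigamma_eq h0e]
    have hu := tg_upper h0e
    calc ((N:ℝ) + c) * tg ((N:ℝ) + c + e)
        ≤ ((N:ℝ) + c) * (1 / ((N:ℝ) + c + e) + 1 / ((N:ℝ) + c + e) ^ 2) :=
          mul_le_mul_of_nonneg_left hu h0.le
      _ ≤ ((N:ℝ) + c + e) * (1 / ((N:ℝ) + c + e) + 1 / ((N:ℝ) + c + e) ^ 2) := by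
          have hnn : (0:ℝ) ≤ 1 / ((N:ℝ) + c + e) + 1 / ((N:ℝ) + c + e) ^ 2 := by positivity
          nlinarith
      _ = 1 + 1 / ((N:ℝ) + c + e) := by field_simp


lemma sff_eventual_eq {k : ℝ} (hk : 0 < k) {N : ℕ} (hN : k + 1 ≤ (N:ℝ)) :
    SFF N k = (k - Real.sin (2 * π * k) / (2 * π)) +
      Real.sin (π * k) ^ 2 / π ^ 2 *
        (digamma ((N : ℝ) + k) + ((N : ℝ) + k) * trigamma ((N : ℝ) + k) +
          digamma ((N : ℝ) - k + 1) + ((N : ℝ) - k) * trigamma ((N : ℝ) - k + 1) -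
          2 * k * trigamma (k + 1) - 2 * digamma (k + 1)) := by
  have h2π : (0:ℝ) < 2 * π := by positivity
  have hsin : -(1:ℝ) ≤ Real.sin (2 * π * k) := Real.neg_one_le_sin _
  have hdiv : -(1:ℝ) ≤ Real.sin (2 * π * k) / (2 * π) := by
    rw [le_div_iff₀ h2π]
    nlinarith [Real.pi_gt_three]
  have hmin : k - Real.sin (2 * π * k) / (2 * π) ≤ (N:ℝ) := by linarith
  rw [SFF, abs_of_pos hk, abs_of_nonneg (show (0:ℝ) ≤ (N:ℝ) - k by linarith),
    min_eq_right hmin]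

end SFFAux
end

open SFFAux in
/-- For fixed non-integer `k > 0`, `S_N(k) − (2 sin²(πk)/π²) log N` converges to `h(k)`. -/
theorem sff_log_growth (k : ℝ) (hk : 0 < k) (hki : ∀ n : ℤ, k ≠ (n : ℝ)) :
    Filter.Tendsto
      (fun N : ℕ => SFF N k - 2 * Real.sin (π * k) ^ 2 / π ^ 2 * Real.log N)
      Filter.atTop
      (nhds ((1 - 2 * Real.sin (π * k) ^ 2 / π ^ 2 * trigamma (k + 1)) * k -
        2 * Real.sin (π * k) ^ 2 / π ^ 2 * digamma (k + 1) -
        Real.sin (2 * π * k) / (2 * π) + 2 * Real.sin (π * k) ^ 2 / π ^ 2)) := by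
  have T1 := SFFAux.dg_asymp k
  have T2 : Filter.Tendsto (fun N : ℕ => ((N:ℝ) + k) * trigamma ((N:ℝ) + k)) atTop (nhds 1) :=
    (SFFAux.tri_asymp k 0 le_rfl).congr (fun N => by rw [add_zero])
  have T3 : Filter.Tendsto (fun N : ℕ => digamma ((N:ℝ) - k + 1) - Real.log N) atTop (nhds 0) :=
    (SFFAux.dg_asymp (1 - k)).congr
      (fun N => by rw [show (N:ℝ) + (1 - k) = (N:ℝ) - k + 1 by ring])
  have T4 : Filter.Tendsto (fun N : ℕ => ((N:ℝ) - k) * trigamma ((N:ℝ) - k + 1)) atTop (nhds 1) :=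
    (SFFAux.tri_asymp (-k) 1 zero_le_one).congr
      (fun N => by rw [show (N:ℝ) + -k + 1 = (N:ℝ) - k + 1 by ring,
        show (N:ℝ) + -k = (N:ℝ) - k by ring])
  have Hsum := (((T1.add T2).add T3).add T4).sub
    (tendsto_const_nhds (x := 2 * k * trigamma (k + 1) + 2 * digamma (k + 1))
      (f := Filter.atTop (α := ℕ)))
  have Hfull := (tendsto_const_nhds (x := k - Real.sin (2 * π * k) / (2 * π))
      (f := Filter.atTop (α := ℕ))).add
    (Hsum.const_mul (Real.sin (π * k) ^ 2 / π ^ 2))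
  have hval : ((1 - 2 * Real.sin (π * k) ^ 2 / π ^ 2 * trigamma (k + 1)) * k -
        2 * Real.sin (π * k) ^ 2 / π ^ 2 * digamma (k + 1) -
        Real.sin (2 * π * k) / (2 * π) + 2 * Real.sin (π * k) ^ 2 / π ^ 2)
      = (k - Real.sin (2 * π * k) / (2 * π)) + Real.sin (π * k) ^ 2 / π ^ 2 *
        (0 + 1 + 0 + 1 - (2 * k * trigamma (k + 1) + 2 * digamma (k + 1))) := by
    ring
  rw [hval]
  refine Hfull.congr' ?_
  filter_upwards [eventually_ge_atTop ⌈k + 1⌉₊] with N hN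
  have hNk : k + 1 ≤ (N:ℝ) := (Nat.le_ceil _).trans (Nat.cast_le.mpr hN)
  rw [SFFAux.sff_eventual_eq hk hNk]
  ring
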